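/- With notation as in the Lions–Peetre construction (X₀ ⊂ X₁ strictly embedded r.i. spaces on [0,1], E with 1-unconditional normalized basis {e_n}, parameters (m_n^{-1}),(m_n) satisfying the rapid growth condition), the space W := W_E^K(X₀,X₁) contains a sequence of normalized characteristic functions of pairwise disjoint measurable sets {A_n} ⊂ [0,1] such that {χ_{A_n}/‖χ_{A_n}‖_W} is equivalent in W to the basis {e_n} of E. -/

import Mathlib

open MeasureTheory Set Filter Topology

noncomputable section

/-- A Banach function lattice on a subset `I ⊆ ℝ` (with Lebesgue measure), encoded by
a membership predicate `Mem` and a (total) norm function `N` satisfying the lattice/ideal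
axioms on members. -/
structure BFL (I : Set ℝ) where
  Mem : (ℝ → ℝ) → Prop
  N : (ℝ → ℝ) → ℝ
  mem_meas : ∀ f, Mem f → AEMeasurable f (volume.restrict I)
  nonneg : ∀ f, 0 ≤ N f
  zero_mem : Mem 0
  zero_norm : N 0 = 0
  ideal : ∀ f g, AEMeasurable f (volume.restrict I) →
    (∀ᵐ t ∂volume.restrict I, |f t| ≤ |g t|) → Mem g → Mem f ∧ N f ≤ N g
  add_mem : ∀ f g, Mem f → Mem g → Mem (f + g)
  add_le : ∀ f g, Mem f → Mem g → N (f + g) ≤ N f + N g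
  smul_mem : ∀ (c : ℝ) f, Mem f → Mem (c • f)
  smul_norm : ∀ (c : ℝ) f, Mem f → N (c • f) = |c| * N f

/-- A rearrangement invariant (symmetric) space on `I`: a Banach function lattice whose
norm depends only on the distribution function, having the Fatou property (the paper's
standing assumption that r.i. spaces are separable or maximal). -/
structure RIS (I : Set ℝ) extends BFL I where
  symm : ∀ f g, AEMeasurable f (volume.restrict I) → Mem g →
    (∀ τ : ℝ, 0 < τ →
      (volume.restrict I) {t | τ < |f t|} = (volume.restrict I) {t | τ < |g t|}) →
    Mem f ∧ N f = N g
  fatou : ∀ (f : ℕ → ℝ → ℝ) (g : ℝ → ℝ) (C : ℝ), (∀ n, Mem (f n)) →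
    (∀ n, ∀ᵐ t ∂volume.restrict I, 0 ≤ f n t ∧ f n t ≤ f (n + 1) t) →
    (∀ᵐ t ∂volume.restrict I, Tendsto (fun n => f n t) atTop (𝓝 (g t))) →
    AEMeasurable g (volume.restrict I) → (∀ n, N (f n) ≤ C) →
    Mem g ∧ N g ≤ C

/-- The fundamental function `φ_X(t) = ‖χ_{[0,t]}‖_X` of an r.i. space on `[0,1]`. -/
def fund (X : RIS (Set.Icc (0:ℝ) 1)) (t : ℝ) : ℝ :=
  X.N ((Set.Icc (0:ℝ) t).indicator fun _ => (1:ℝ))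

/-- The Peetre K-functional `k(α, β, a; X₀, X₁)`. -/
def Kfun {I : Set ℝ} (X0 X1 : BFL I) (α β : ℝ) (a : ℝ → ℝ) : ℝ :=
  sInf {v | ∃ a0 a1, X0.Mem a0 ∧ X1.Mem a1 ∧ a = a0 + a1 ∧
    v = α * X0.N a0 + β * X1.N a1}

/-- `X₀` is strictly embedded into `X₁`: every norm-bounded sequence in `X₀` whose supports
have measure tending to `0` tends to `0` in the `X₁` norm. -/
def StrictEmb (X0 X1 : RIS (Set.Icc (0:ℝ) 1)) : Prop :=
  ∀ (x : ℕ → ℝ → ℝ) (C : ℝ), (∀ n, X0.Mem (x n)) → (∀ n, X0.N (x n) ≤ C) →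
    Tendsto (fun n => volume (Function.support (x n) ∩ Set.Icc 0 1)) atTop (𝓝 0) →
    Tendsto (fun n => X1.N (x n)) atTop (𝓝 0)
/-- A Banach space with a normalized 1-unconditional basis `{e_n}`, encoded (via the
coordinate representation) as a Banach sequence lattice: a membership predicate `Mem`
and a norm `N` on sequences which is monotone in the absolute values of coordinates
(1-unconditionality), with `N(e_n) = 1`, and such that absolutely summable coefficient
sequences belong to the space with norm at most the sum (convergence of the basis
expansion). -/
structure SeqSpace where
  Mem : (ℕ → ℝ) → Prop
  N : (ℕ → ℝ) → ℝ
  nonneg : ∀ f, 0 ≤ N f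
  mono : ∀ f g, (∀ n, |f n| ≤ |g n|) → Mem g → Mem f ∧ N f ≤ N g
  add_mem : ∀ f g, Mem f → Mem g → Mem (f + g)
  add_le : ∀ f g, Mem f → Mem g → N (f + g) ≤ N f + N g
  smul_mem : ∀ (c : ℝ) f, Mem f → Mem (c • f)
  smul_norm : ∀ (c : ℝ) f, Mem f → N (c • f) = |c| * N f
  unit_mem : ∀ n, Mem (Pi.single n 1)
  unit_norm : ∀ n, N (Pi.single n 1) = 1
  abs_le : ∀ f, (Summable fun n => |f n|) → Mem f ∧ N f ≤ ∑' n, |f n|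

/-- The Lions–Peetre coefficient vector: `n ↦ k(m_n⁻¹, m_n, x; X₀, X₁)`. -/
def LPvec (X0 X1 : BFL (Set.Icc (0:ℝ) 1)) (m : ℕ → ℝ) (x : ℝ → ℝ) : ℕ → ℝ :=
  fun n => Kfun X0 X1 (m n)⁻¹ (m n) x

/-- Membership in the sum `X₀ + X₁`. -/
def SumMem (X0 X1 : BFL (Set.Icc (0:ℝ) 1)) (x : ℝ → ℝ) : Prop :=
  ∃ a0 a1, X0.Mem a0 ∧ X1.Mem a1 ∧ x = a0 + a1

/-- indicator shorthand -/
def ind (A : Set ℝ) : ℝ → ℝ := A.indicator fun _ => (1:ℝ)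

/-- fundamental function shorthand -/
def phi (X : RIS (Set.Icc (0:ℝ) 1)) (t : ℝ) : ℝ := X.N (ind (Set.Icc 0 t))

lemma ind_meas {A : Set ℝ} (hA : MeasurableSet A) : Measurable (ind A) :=
  measurable_const.indicator hA

lemma ind_nonneg (A : Set ℝ) (t : ℝ) : 0 ≤ ind A t := by
  unfold ind; by_cases h : t ∈ A <;> simp [Set.indicator_apply, h]

lemma ind_le_one (A : Set ℝ) (t : ℝ) : ind A t ≤ 1 := by
  unfold ind; by_cases h : t ∈ A <;> simp [Set.indicator_apply, h]

lemma abs_ind_le {A B : Set ℝ} (h : A ⊆ B) (t : ℝ) : |ind A t| ≤ |ind B t| := by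
  unfold ind
  by_cases ht : t ∈ A
  · simp [Set.indicator_apply, ht, h ht]
  · by_cases htB : t ∈ B <;> simp [Set.indicator_apply, ht, htB]

lemma dist_ind {A : Set ℝ} {τ : ℝ} (hτ : 0 < τ) :
    {t | τ < |ind A t|} = if τ < 1 then A else ∅ := by
  ext t
  by_cases ht : t ∈ A <;> by_cases h1 : τ < 1 <;>
    simp [ind, Set.indicator_apply, ht, h1, abs_of_nonneg] <;> linarith

/-- membership of sub-indicators -/
lemma ind_mem (X : RIS (Set.Icc (0:ℝ) 1)) (hI : X.Mem (ind (Set.Icc 0 1)))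
    {A : Set ℝ} (hA : MeasurableSet A) (hAI : A ⊆ Set.Icc 0 1) : X.Mem (ind A) :=
  (X.ideal _ _ (ind_meas hA).aemeasurable (Filter.Eventually.of_forall (abs_ind_le hAI)) hI).1

/-- norm of an indicator equals the fundamental function of its measure -/
lemma ind_norm (X : RIS (Set.Icc (0:ℝ) 1)) (hI : X.Mem (ind (Set.Icc 0 1)))
    {A : Set ℝ} (hA : MeasurableSet A) (hAI : A ⊆ Set.Icc 0 1)
    {v : ℝ} (hv0 : 0 ≤ v) (hv1 : v ≤ 1) (hvol : volume A = ENNReal.ofReal v) :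
    X.N (ind A) = phi X v := by
  have hIm : MeasurableSet (Set.Icc (0:ℝ) 1) := measurableSet_Icc
  have hsub : Set.Icc (0:ℝ) v ⊆ Set.Icc 0 1 := Set.Icc_subset_Icc le_rfl hv1
  have hmemv : X.Mem (ind (Set.Icc 0 v)) := ind_mem X hI measurableSet_Icc hsub
  have key : ∀ τ : ℝ, 0 < τ →
      (volume.restrict (Set.Icc (0:ℝ) 1)) {t | τ < |ind A t|}
        = (volume.restrict (Set.Icc (0:ℝ) 1)) {t | τ < |ind (Set.Icc 0 v) t|} := by
    intro τ hτ
    rw [dist_ind hτ, dist_ind hτ]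
    by_cases h1 : τ < 1
    · simp only [if_pos h1]
      rw [Measure.restrict_apply' hIm, Measure.restrict_apply' hIm,
        Set.inter_eq_self_of_subset_left hAI, Set.inter_eq_self_of_subset_left hsub,
        hvol, Real.volume_Icc]
      norm_num
    · simp [if_neg h1]
  exact (X.symm _ _ (ind_meas hA).aemeasurable hmemv key).2
lemma phi_mono (X : RIS (Set.Icc (0:ℝ) 1)) (hI : X.Mem (ind (Set.Icc 0 1)))
    {s t : ℝ} (hs : s ≤ t) (ht : t ≤ 1) : phi X s ≤ phi X t := by
  have hmem : X.Mem (ind (Set.Icc 0 t)) :=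
    ind_mem X hI measurableSet_Icc (Set.Icc_subset_Icc le_rfl ht)
  exact (X.ideal _ _ (ind_meas measurableSet_Icc).aemeasurable
    (Filter.Eventually.of_forall (abs_ind_le (Set.Icc_subset_Icc le_rfl hs))) hmem).2

lemma phi_nonneg (X : RIS (Set.Icc (0:ℝ) 1)) (t : ℝ) : 0 ≤ phi X t := X.nonneg _

lemma phi_subadd (X : RIS (Set.Icc (0:ℝ) 1)) (hI : X.Mem (ind (Set.Icc 0 1)))
    {s t : ℝ} (hs : 0 ≤ s) (ht : 0 ≤ t) (hst : s + t ≤ 1) :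
    phi X (s + t) ≤ phi X s + phi X t := by
  have hsI : s ≤ 1 := by linarith
  have hmem1 : X.Mem (ind (Set.Icc 0 s)) :=
    ind_mem X hI measurableSet_Icc (Set.Icc_subset_Icc le_rfl hsI)
  have hsub2 : Set.Ioc s (s + t) ⊆ Set.Icc 0 1 := fun x hx =>
    ⟨by rcases hx with ⟨h1, h2⟩; linarith, by rcases hx with ⟨h1, h2⟩; linarith⟩
  have hmem2 : X.Mem (ind (Set.Ioc s (s + t))) := ind_mem X hI measurableSet_Ioc hsub2
  have heq : ∀ x, ind (Set.Icc 0 (s + t)) x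
      = (ind (Set.Icc 0 s) + ind (Set.Ioc s (s + t))) x := by
    intro x
    simp only [Pi.add_apply, ind, Set.indicator_apply, Set.mem_Icc, Set.mem_Ioc]
    by_cases h0 : 0 ≤ x
    · by_cases h1 : x ≤ s
      · simp [h0, h1, not_lt.mpr h1]; linarith
      · push_neg at h1
        by_cases h2 : x ≤ s + t <;> simp [h0, h1, h2, not_le.mpr h1]
    · push_neg at h0
      have hxs : ¬ s < x := by push_neg; linarith
      simp [not_le.mpr h0, hxs]
  have hNle : X.N (ind (Set.Icc 0 (s + t)))
      ≤ X.N (ind (Set.Icc 0 s) + ind (Set.Ioc s (s + t))) := by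
    refine (X.ideal _ _ (ind_meas measurableSet_Icc).aemeasurable
      (Filter.Eventually.of_forall fun x => ?_) (X.add_mem _ _ hmem1 hmem2)).2
    rw [heq x]
  have hnorm2 : X.N (ind (Set.Ioc s (s + t))) = phi X t := by
    refine ind_norm X hI measurableSet_Ioc hsub2 ht (by linarith) ?_
    rw [Real.volume_Ioc]; ring_nf
  calc phi X (s + t) ≤ X.N (ind (Set.Icc 0 s) + ind (Set.Ioc s (s + t))) := hNle
    _ ≤ X.N (ind (Set.Icc 0 s)) + X.N (ind (Set.Ioc s (s + t))) := X.add_le _ _ hmem1 hmem2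
    _ = phi X s + phi X t := by rw [hnorm2]; rfl

lemma phi_ge (X : RIS (Set.Icc (0:ℝ) 1)) (hI : X.Mem (ind (Set.Icc 0 1)))
    (hX1 : phi X 1 = 1) {t : ℝ} (h0 : 0 < t) (h1 : t ≤ 1) : t / 2 ≤ phi X t := by
  have key : ∀ k : ℕ, phi X (min (k * t) 1) ≤ k * phi X t := by
    intro k
    induction k with
    | zero =>
      simp only [Nat.cast_zero, zero_mul, min_eq_left (by norm_num : (0:ℝ) ≤ 1)]
      have hz : phi X 0 ≤ X.N 0 := by
        refine (X.ideal _ _ (ind_meas measurableSet_Icc).aemeasurable ?_ X.zero_mem).2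
        have hnull : (volume.restrict (Set.Icc (0:ℝ) 1)) {(0:ℝ)} = 0 :=
          le_antisymm (le_trans (Measure.restrict_le_self _) (by simp)) zero_le
        filter_upwards [measure_eq_zero_iff_ae_notMem.mp hnull] with x hx
        simp [ind, Set.indicator_apply, Set.Icc_self, hx]
      rw [X.zero_norm] at hz
      simpa using hz
    | succ k ih =>
      by_cases hk : (1:ℝ) ≤ k * t
      · have : min ((k+1:ℕ) * t) 1 = 1 := by
          rw [min_eq_right]; push_cast; nlinarith
        rw [this]
        have : min ((k:ℝ) * t) 1 = 1 := min_eq_right hk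
        calc phi X 1 ≤ k * phi X t := by rw [← this]; exact ih
          _ ≤ (k+1:ℕ) * phi X t := by
              push_cast; nlinarith [phi_nonneg X t]
      · push_neg at hk
        have hmin : min ((k:ℝ) * t) 1 = (k:ℝ) * t := min_eq_left hk.le
        have hkt0 : 0 ≤ (k:ℝ) * t := by positivity
        by_cases hk1 : (k+1:ℝ) * t ≤ 1
        · have : min ((k+1:ℕ)*t) 1 = (k:ℝ)*t + t := by
            push_cast; rw [min_eq_left (by linarith)]; ring
          rw [this]
          calc phi X ((k:ℝ)*t + t) ≤ phi X ((k:ℝ)*t) + phi X t :=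
                phi_subadd X hI hkt0 h0.le (by push_cast at hk1 ⊢; linarith)
            _ ≤ (k:ℝ) * phi X t + phi X t := by
                have := ih; rw [hmin] at this; linarith
            _ = (k+1:ℕ) * phi X t := by push_cast; ring
        · push_neg at hk1
          have : min ((k+1:ℕ)*t) 1 = (k:ℝ)*t + (1 - (k:ℝ)*t) := by
            push_cast; rw [min_eq_right (by linarith)]; ring
          rw [this]
          calc phi X ((k:ℝ)*t + (1 - (k:ℝ)*t)) ≤ phi X ((k:ℝ)*t) + phi X (1 - (k:ℝ)*t) :=
                phi_subadd X hI hkt0 (by linarith) (by linarith)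
            _ ≤ (k:ℝ) * phi X t + phi X t := by
                have h2 := ih; rw [hmin] at h2
                have h3 : phi X (1 - (k:ℝ)*t) ≤ phi X t :=
                  phi_mono X hI (by push_cast at hk1; linarith) h1
                linarith
            _ = (k+1:ℕ) * phi X t := by push_cast; ring
  set k := ⌈1/t⌉₊ with hk
  have hk1 : (1:ℝ) ≤ k * t := by
    have := Nat.le_ceil (1/t)
    calc (1:ℝ) = (1/t) * t := by field_simp
      _ ≤ k * t := by apply mul_le_mul_of_nonneg_right this h0.le
  have hk2 : (k:ℝ) ≤ 2 / t := by
    have hc : (⌈1/t⌉₊:ℝ) < 1/t + 1 := Nat.ceil_lt_add_one (by positivity)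
    have ht1 : (1:ℝ) ≤ 1/t := by rw [le_div_iff₀ h0]; linarith
    have : (k:ℝ) ≤ 1/t + 1/t := by linarith
    calc (k:ℝ) ≤ 1/t + 1/t := this
      _ = 2/t := by ring

  have h1le : (1:ℝ) ≤ k * phi X t := by
    have := key k
    rw [min_eq_right hk1, hX1] at this; exact this
  have hkpos : (0:ℝ) < k := by
    by_contra h; push_neg at h
    have : (k:ℝ) = 0 := le_antisymm h (by positivity)
    rw [this] at h1le; linarith
  have : 1 / (k:ℝ) ≤ phi X t := by
    rw [div_le_iff₀ hkpos]; linarith [h1le]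
  calc t/2 ≤ 1/(k:ℝ) := by
        rw [div_le_div_iff₀ (by norm_num) hkpos]
        have h5 := mul_le_mul_of_nonneg_left hk2 h0.le
        rw [mul_div_cancel₀ _ (ne_of_gt h0)] at h5
        nlinarith
    _ ≤ phi X t := this

lemma phi_pos (X : RIS (Set.Icc (0:ℝ) 1)) (hI : X.Mem (ind (Set.Icc 0 1)))
    (hX1 : phi X 1 = 1) {t : ℝ} (h0 : 0 < t) (h1 : t ≤ 1) : 0 < phi X t :=
  lt_of_lt_of_le (by linarith : (0:ℝ) < t/2) (phi_ge X hI hX1 h0 h1)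
lemma phi_left_cont (X : RIS (Set.Icc (0:ℝ) 1)) (hI : X.Mem (ind (Set.Icc 0 1)))
    {s : ℝ} (hs1 : s ≤ 1) (T : ℕ → ℝ) (hTmono : Monotone T)
    (hT0 : ∀ k, 0 < T k) (hTs : ∀ k, T k < s) (hTlim : Tendsto T atTop (𝓝 s))
    {C : ℝ} (hC : ∀ k, X.N (ind (Set.Icc 0 (T k))) ≤ C) : phi X s ≤ C := by
  have hs0 : 0 < s := lt_trans (hT0 0) (hTs 0)
  have hmemk : ∀ k, X.Mem (ind (Set.Icc 0 (T k))) := fun k =>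
    ind_mem X hI measurableSet_Icc (Set.Icc_subset_Icc le_rfl (le_of_lt (lt_of_lt_of_le (hTs k) hs1)))
  have hmono : ∀ k, ∀ᵐ t ∂(volume.restrict (Set.Icc (0:ℝ) 1)),
      0 ≤ ind (Set.Icc 0 (T k)) t ∧ ind (Set.Icc 0 (T k)) t ≤ ind (Set.Icc 0 (T (k+1))) t := by
    intro k
    refine Filter.Eventually.of_forall fun t => ⟨ind_nonneg _ _, ?_⟩
    by_cases ht : t ∈ Set.Icc (0:ℝ) (T k)
    · have : t ∈ Set.Icc (0:ℝ) (T (k+1)) :=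
        Set.Icc_subset_Icc le_rfl (hTmono (Nat.le_succ k)) ht
      simp [ind, Set.indicator_apply, ht, this]
    · have h0 : ind (Set.Icc 0 (T k)) t = 0 := by simp [ind, Set.indicator_apply, ht]
      rw [h0]; exact ind_nonneg _ _
  have hconv : ∀ᵐ t ∂(volume.restrict (Set.Icc (0:ℝ) 1)),
      Tendsto (fun k => ind (Set.Icc 0 (T k)) t) atTop (𝓝 (ind (Set.Ico 0 s) t)) := by
    refine Filter.Eventually.of_forall fun t => ?_
    by_cases ht : t ∈ Set.Ico 0 s
    · have hev : ∀ᶠ k in atTop, ind (Set.Icc 0 (T k)) t = 1 := by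
        have : ∀ᶠ k in atTop, t < T k := hTlim.eventually (eventually_gt_nhds ht.2)
        filter_upwards [this] with k hk
        simp [ind, Set.indicator_apply, Set.mem_Icc, ht.1, le_of_lt hk]
      rw [show ind (Set.Ico 0 s) t = 1 by simp [ind, Set.indicator_apply, ht]]
      exact Tendsto.congr' (by filter_upwards [hev] with k hk; exact hk.symm) tendsto_const_nhds
    · have : ∀ k, ind (Set.Icc 0 (T k)) t = 0 := by
        intro k
        rcases not_and_or.mp (Set.mem_Ico.not.mp ht) with h | h
        · simp [ind, Set.indicator_apply, Set.mem_Icc, h]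
        · push_neg at h
          have : ¬ t ≤ T k := by push_neg; exact lt_of_lt_of_le (hTs k) h
          simp [ind, Set.indicator_apply, Set.mem_Icc, this]
      rw [show ind (Set.Ico 0 s) t = 0 by simp [ind, Set.indicator_apply, ht]]
      simpa [this] using tendsto_const_nhds
  have hfatou := X.fatou _ _ C hmemk hmono hconv (ind_meas measurableSet_Ico).aemeasurable hC
  have hsym : phi X s = X.N (ind (Set.Ico 0 s)) := by
    refine (X.symm _ _ (ind_meas measurableSet_Icc).aemeasurable hfatou.1 ?_).2
    intro τ hτ
    rw [dist_ind hτ, dist_ind hτ]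
    by_cases h1 : τ < 1
    · simp only [if_pos h1]
      rw [Measure.restrict_apply' measurableSet_Icc, Measure.restrict_apply' measurableSet_Icc]
      rw [Set.inter_eq_self_of_subset_left (Set.Icc_subset_Icc le_rfl hs1),
        Set.inter_eq_self_of_subset_left (Set.Ico_subset_Icc_self.trans (Set.Icc_subset_Icc le_rfl hs1)),
        Real.volume_Icc, Real.volume_Ico]
    · simp [if_neg h1]
  calc phi X s = X.N (ind (Set.Ico 0 s)) := hsym
    _ ≤ C := hfatou.2
lemma ratio_small (X0 X1 : RIS (Set.Icc (0:ℝ) 1))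
    (hstrict : StrictEmb X0 X1)
    (hconst : X0.Mem (ind (Set.Icc 0 1)))
    (hI1 : X1.Mem (ind (Set.Icc 0 1)))
    (h0 : phi X0 1 = 1) {ε : ℝ} (hε : 0 < ε) {δ : ℝ} (hδ : 0 < δ) :
    ∃ t, 0 < t ∧ t ≤ 1 ∧ t < δ ∧ phi X1 t ≤ ε * phi X0 t := by
  set u : ℕ → ℝ := fun k => ((k:ℝ) + 2)⁻¹ with hu
  have hu0 : ∀ k, 0 < u k := fun k => by positivity
  have hu1 : ∀ k, u k ≤ 1 := by
    intro k
    rw [hu]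
    have : (1:ℝ) ≤ (k:ℝ) + 2 := by have := Nat.cast_nonneg (α := ℝ) k; linarith
    simpa using inv_le_one_of_one_le₀ this
  have hphi0pos : ∀ k, 0 < phi X0 (u k) := fun k => phi_pos X0 hconst h0 (hu0 k) (hu1 k)
  set x : ℕ → ℝ → ℝ := fun k => (phi X0 (u k))⁻¹ • ind (Set.Icc 0 (u k)) with hx
  have hmemu : ∀ k, X0.Mem (ind (Set.Icc 0 (u k))) := fun k =>
    ind_mem X0 hconst measurableSet_Icc (Set.Icc_subset_Icc le_rfl (hu1 k))
  have hmemx : ∀ k, X0.Mem (x k) := fun k => X0.smul_mem _ _ (hmemu k)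
  have hnormx : ∀ k, X0.N (x k) ≤ 1 := by
    intro k
    rw [hx]
    rw [X0.smul_norm _ _ (hmemu k), abs_of_nonneg (inv_nonneg.mpr (phi_nonneg X0 _))]
    rw [show X0.N (ind (Set.Icc 0 (u k))) = phi X0 (u k) from rfl]
    rw [inv_mul_cancel₀ (ne_of_gt (hphi0pos k))]
  have hsupp : Tendsto (fun k => volume (Function.support (x k) ∩ Set.Icc 0 1)) atTop (𝓝 0) := by
    have hsupp_eq : ∀ k, Function.support (x k) ∩ Set.Icc 0 1 = Set.Icc 0 (u k) := by
      intro k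
      ext t
      constructor
      · rintro ⟨hs, -⟩
        by_contra ht
        apply hs
        simp [hx, ind, Set.indicator_apply, ht]
      · intro ht
        refine ⟨?_, Set.Icc_subset_Icc le_rfl (hu1 k) ht⟩
        simp only [hx, Function.mem_support, Pi.smul_apply, smul_eq_mul, ind,
          Set.indicator_apply, if_pos ht, mul_one]
        exact inv_ne_zero (ne_of_gt (hphi0pos k))
    simp only [hsupp_eq, Real.volume_Icc, sub_zero]
    have hulim : Tendsto u atTop (𝓝 0) := by
      apply Filter.Tendsto.comp tendsto_inv_atTop_zero
      exact tendsto_atTop_add_const_right _ 2 tendsto_natCast_atTop_atTop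
    simpa using (ENNReal.tendsto_ofReal hulim)
  have hN1 := hstrict x 1 hmemx hnormx hsupp
  have hN1eq : ∀ k, X1.N (x k) = (phi X0 (u k))⁻¹ * phi X1 (u k) := by
    intro k
    rw [hx]
    rw [X1.smul_norm _ _ (ind_mem X1 hI1 measurableSet_Icc (Set.Icc_subset_Icc le_rfl (hu1 k))),
      abs_of_nonneg (inv_nonneg.mpr (phi_nonneg X0 _))]
    rfl
  have hev : ∀ᶠ k in atTop, X1.N (x k) < ε ∧ u k < δ := by
    have h1 : ∀ᶠ k in atTop, X1.N (x k) < ε := hN1.eventually (eventually_lt_nhds hε)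
    have hulim : Tendsto u atTop (𝓝 0) := by
      apply Filter.Tendsto.comp tendsto_inv_atTop_zero
      exact tendsto_atTop_add_const_right _ 2 tendsto_natCast_atTop_atTop
    have h2 : ∀ᶠ k in atTop, u k < δ := hulim.eventually (eventually_lt_nhds hδ)
    exact h1.and h2
  obtain ⟨k, hk, hkδ⟩ := hev.exists
  refine ⟨u k, hu0 k, hu1 k, hkδ, ?_⟩
  rw [hN1eq k] at hk
  rw [inv_mul_lt_iff₀ (hphi0pos k)] at hk
  linarith [hk]

lemma ratio_select (X0 X1 : RIS (Set.Icc (0:ℝ) 1))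
    (hstrict : StrictEmb X0 X1)
    (hconst : X0.Mem (ind (Set.Icc 0 1)))
    (hI1 : X1.Mem (ind (Set.Icc 0 1)))
    (h0 : phi X0 1 = 1) (h1 : phi X1 1 = 1)
    {ε : ℝ} (hε : 0 < ε) (hε1 : ε < 1) :
    ∃ s, 0 < s ∧ s ≤ 2 * ε ∧ s < 1 ∧
      (ε/2) * phi X0 s ≤ phi X1 s ∧ phi X1 s ≤ ε * phi X0 s := by
  classical
  set S : Set ℝ := {t | 0 < t ∧ t ≤ 1 ∧ phi X1 t ≤ ε * phi X0 t} with hS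
  obtain ⟨t0, ht00, ht01, -, ht0r⟩ := ratio_small X0 X1 hstrict hconst hI1 h0 hε one_pos
  have ht0S : t0 ∈ S := ⟨ht00, ht01, ht0r⟩
  have hSne : S.Nonempty := ⟨t0, ht0S⟩
  have hSbdd : BddAbove S := ⟨1, fun t ht => ht.2.1⟩
  set s := sSup S with hsdef
  have hs1 : s ≤ 1 := csSup_le hSne fun t ht => ht.2.1
  have hst0 : t0 ≤ s := le_csSup hSbdd ht0S
  have hs0 : 0 < s := lt_of_lt_of_le ht00 hst0
  have hsS : s ∈ S := by
    by_contra hsS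
    -- build a monotone sequence in S tending to s
    have hex : ∀ k : ℕ, ∃ t ∈ S, s - ((k:ℝ)+1)⁻¹ < t := by
      intro k
      apply exists_lt_of_lt_csSup hSne
      have : (0:ℝ) < ((k:ℝ)+1)⁻¹ := by positivity
      linarith
    choose t' ht'S ht'gt using hex
    set T : ℕ → ℝ := fun k => Nat.rec (t' 0) (fun k Tk => max Tk (t' (k+1))) k with hT
    have hTsucc : ∀ k, T (k+1) = max (T k) (t' (k+1)) := fun k => rfl
    have hTS : ∀ k, T k ∈ S := by
      intro k
      induction k with
      | zero => exact ht'S 0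
      | succ k ih =>
        rw [hTsucc]
        rcases max_choice (T k) (t' (k+1)) with h | h <;> rw [h]
        · exact ih
        · exact ht'S (k+1)
    have hTmono : Monotone T := monotone_nat_of_le_succ fun k => by
      rw [hTsucc]; exact le_max_left _ _
    have hTge : ∀ k, t' k ≤ T k := by
      intro k
      cases k with
      | zero => exact le_rfl
      | succ k => rw [hTsucc]; exact le_max_right _ _
    have hTlt : ∀ k, T k < s :=
      fun k => lt_of_le_of_ne (le_csSup hSbdd (hTS k)) (fun h => hsS (h ▸ hTS k))
    have hTlim : Tendsto T atTop (𝓝 s) := by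
      have hlow : Tendsto (fun k : ℕ => s - ((k:ℝ)+1)⁻¹) atTop (𝓝 s) := by
        have : Tendsto (fun k : ℕ => ((k:ℝ)+1)⁻¹) atTop (𝓝 0) := by
          apply Filter.Tendsto.comp tendsto_inv_atTop_zero
          exact tendsto_atTop_add_const_right _ 1 tendsto_natCast_atTop_atTop
        simpa using tendsto_const_nhds.sub this
      refine tendsto_of_tendsto_of_tendsto_of_le_of_le hlow tendsto_const_nhds
        (fun k => le_of_lt (lt_of_lt_of_le (ht'gt k) (hTge k))) (fun k => (hTlt k).le)
    have hC : ∀ k, X1.N (ind (Set.Icc 0 (T k))) ≤ ε * phi X0 s := by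
      intro k
      have h2 := (hTS k).2.2
      have h3 : phi X0 (T k) ≤ phi X0 s := phi_mono X0 hconst (hTlt k).le hs1
      calc X1.N (ind (Set.Icc 0 (T k))) = phi X1 (T k) := rfl
        _ ≤ ε * phi X0 (T k) := h2
        _ ≤ ε * phi X0 s := by nlinarith
    have := phi_left_cont X1 hI1 hs1 T hTmono (fun k => (hTS k).1) hTlt hTlim hC
    exact hsS ⟨hs0, hs1, this⟩
  have hslt1 : s < 1 := by
    rcases lt_or_eq_of_le hs1 with h | h
    · exact h
    · exfalso
      have := hsS.2.2
      rw [h, h0, h1] at this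
      linarith
  -- lower ratio bound
  have hlow : (ε/2) * phi X0 s ≤ phi X1 s := by
    set u := min s (1 - s) with hudef
    have hu0 : 0 < u := lt_min hs0 (by linarith)
    have hus : u ≤ s := min_le_left _ _
    have hsu1 : s + u ≤ 1 := by
      have : u ≤ 1 - s := min_le_right _ _
      linarith
    have hnotS : s + u ∉ S := by
      intro h
      have := le_csSup hSbdd h
      linarith
    have hfail : ε * phi X0 (s + u) < phi X1 (s + u) := by
      by_contra h
      push_neg at h
      exact hnotS ⟨by linarith, hsu1, h⟩
    have c1 : phi X0 s ≤ phi X0 (s + u) := phi_mono X0 hconst (by linarith) hsu1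
    have c2 : phi X1 (s + u) ≤ phi X1 s + phi X1 u := phi_subadd X1 hI1 hs0.le hu0.le hsu1
    have c3 : phi X1 u ≤ phi X1 s := phi_mono X1 hI1 hus hs1
    nlinarith
  have hsmall : s ≤ 2 * ε := by
    have g1 : s / 2 ≤ phi X1 s := phi_ge X1 hI1 h1 hs0 hs1
    have g2 : phi X1 s ≤ ε * phi X0 s := hsS.2.2
    have g3 : phi X0 s ≤ phi X0 1 := phi_mono X0 hconst hs1 le_rfl
    rw [h0] at g3
    nlinarith
  exact ⟨s, hs0, hsmall, hslt1, hlow, hsS.2.2⟩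
section Klemmas

variable {I : Set ℝ} (X0 X1 : BFL I)

def Kset (α β : ℝ) (a : ℝ → ℝ) : Set ℝ :=
  {v | ∃ a0 a1, X0.Mem a0 ∧ X1.Mem a1 ∧ a = a0 + a1 ∧
    v = α * X0.N a0 + β * X1.N a1}

lemma Kfun_eq (α β : ℝ) (a : ℝ → ℝ) : Kfun X0 X1 α β a = sInf (Kset X0 X1 α β a) := rfl

variable {α β : ℝ}

lemma Kset_nonneg (hα : 0 ≤ α) (hβ : 0 ≤ β) {a : ℝ → ℝ} :
    ∀ v ∈ Kset X0 X1 α β a, 0 ≤ v := by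
  rintro v ⟨a0, a1, h0, h1, -, rfl⟩
  have := X0.nonneg a0; have := X1.nonneg a1
  positivity

lemma Kset_bdd (hα : 0 ≤ α) (hβ : 0 ≤ β) {a : ℝ → ℝ} : BddBelow (Kset X0 X1 α β a) :=
  ⟨0, fun v hv => Kset_nonneg X0 X1 hα hβ v hv⟩

lemma Kfun_nonneg (hα : 0 ≤ α) (hβ : 0 ≤ β) (a : ℝ → ℝ) : 0 ≤ Kfun X0 X1 α β a :=
  Real.sInf_nonneg (fun v hv => Kset_nonneg X0 X1 hα hβ v hv)

lemma Kfun_le_left (hα : 0 ≤ α) (hβ : 0 ≤ β) {a : ℝ → ℝ} (ha : X0.Mem a) : Kfun X0 X1 α β a ≤ α * X0.N a := by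
  have hmem : α * X0.N a + β * X1.N 0 ∈ Kset X0 X1 α β a :=
    ⟨a, 0, ha, X1.zero_mem, by simp, rfl⟩
  have := csInf_le (Kset_bdd X0 X1 hα hβ) hmem
  rw [X1.zero_norm] at this
  rw [Kfun_eq]; simpa using this

lemma Kfun_le_right (hα : 0 ≤ α) (hβ : 0 ≤ β) {a : ℝ → ℝ} (ha : X1.Mem a) : Kfun X0 X1 α β a ≤ β * X1.N a := by
  have hmem : α * X0.N 0 + β * X1.N a ∈ Kset X0 X1 α β a :=
    ⟨0, a, X0.zero_mem, ha, by simp, rfl⟩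
  have := csInf_le (Kset_bdd X0 X1 hα hβ) hmem
  rw [X0.zero_norm] at this
  rw [Kfun_eq]; simpa using this

lemma Kset_ne_of_mem {a : ℝ → ℝ} (ha : X0.Mem a) : (Kset X0 X1 α β a).Nonempty :=
  ⟨α * X0.N a + β * X1.N 0, a, 0, ha, X1.zero_mem, by simp, rfl⟩

/-- restriction by a multiplier bounded by 1 decreases the K-functional -/
lemma Kfun_restrict (hα : 0 ≤ α) (hβ : 0 ≤ β) {a : ℝ → ℝ} (ha : X0.Mem a)
    (θ : ℝ → ℝ) (hθm : Measurable θ) (hθ : ∀ t, |θ t| ≤ 1) :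
    Kfun X0 X1 α β (fun t => θ t * a t) ≤ Kfun X0 X1 α β a := by
  rw [Kfun_eq, Kfun_eq]
  refine le_csInf (Kset_ne_of_mem X0 X1 ha) ?_
  rintro v ⟨a0, a1, h0, h1, hsum, rfl⟩
  have hm0 : AEMeasurable (fun t => θ t * a0 t) (volume.restrict I) :=
    hθm.aemeasurable.mul (X0.mem_meas a0 h0)
  have hm1 : AEMeasurable (fun t => θ t * a1 t) (volume.restrict I) :=
    hθm.aemeasurable.mul (X1.mem_meas a1 h1)
  have hle0 : ∀ t, |θ t * a0 t| ≤ |a0 t| := fun t => by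
    rw [abs_mul]
    calc |θ t| * |a0 t| ≤ 1 * |a0 t| := by
          apply mul_le_mul_of_nonneg_right (hθ t) (abs_nonneg _)
      _ = |a0 t| := one_mul _
  have hle1 : ∀ t, |θ t * a1 t| ≤ |a1 t| := fun t => by
    rw [abs_mul]
    calc |θ t| * |a1 t| ≤ 1 * |a1 t| := by
          apply mul_le_mul_of_nonneg_right (hθ t) (abs_nonneg _)
      _ = |a1 t| := one_mul _
  obtain ⟨hmem0, hN0⟩ := X0.ideal _ _ hm0 (Filter.Eventually.of_forall hle0) h0
  obtain ⟨hmem1, hN1⟩ := X1.ideal _ _ hm1 (Filter.Eventually.of_forall hle1) h1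
  have hdec : (fun t => θ t * a t) = (fun t => θ t * a0 t) + (fun t => θ t * a1 t) := by
    funext t
    have := congrFun hsum t
    simp only [Pi.add_apply] at this ⊢
    rw [this]; ring
  have hmemv : α * X0.N (fun t => θ t * a0 t) + β * X1.N (fun t => θ t * a1 t)
      ∈ Kset X0 X1 α β (fun t => θ t * a t) :=
    ⟨_, _, hmem0, hmem1, hdec, rfl⟩
  calc sInf (Kset X0 X1 α β (fun t => θ t * a t)) ≤ _ := csInf_le (Kset_bdd X0 X1 hα hβ) hmemv
    _ ≤ α * X0.N a0 + β * X1.N a1 := by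
        have h5 := mul_le_mul_of_nonneg_left hN0 hα
        have h6 := mul_le_mul_of_nonneg_left hN1 hβ
        linarith

/-- subadditivity of the K-functional -/
lemma Kfun_add (hα : 0 ≤ α) (hβ : 0 ≤ β) {a b : ℝ → ℝ} (ha : X0.Mem a) (hb : X0.Mem b) :
    Kfun X0 X1 α β (a + b) ≤ Kfun X0 X1 α β a + Kfun X0 X1 α β b := by
  have core : ∀ va ∈ Kset X0 X1 α β a, ∀ vb ∈ Kset X0 X1 α β b,
      Kfun X0 X1 α β (a + b) ≤ va + vb := by
    rintro va ⟨a0, a1, ha0, ha1, hadec, rfl⟩ vb ⟨b0, b1, hb0, hb1, hbdec, rfl⟩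
    have hdec : a + b = (a0 + b0) + (a1 + b1) := by
      rw [hadec, hbdec]; funext t; simp only [Pi.add_apply]; ring
    have hmemv : α * X0.N (a0 + b0) + β * X1.N (a1 + b1) ∈ Kset X0 X1 α β (a + b) :=
      ⟨_, _, X0.add_mem _ _ ha0 hb0, X1.add_mem _ _ ha1 hb1, hdec, rfl⟩
    calc Kfun X0 X1 α β (a + b) ≤ _ := csInf_le (Kset_bdd X0 X1 hα hβ) hmemv
      _ ≤ (α * X0.N a0 + β * X1.N a1) + (α * X0.N b0 + β * X1.N b1) := by
          have h5 := mul_le_mul_of_nonneg_left (X0.add_le _ _ ha0 hb0) hα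
          have h6 := mul_le_mul_of_nonneg_left (X1.add_le _ _ ha1 hb1) hβ
          nlinarith [h5, h6]
  have step1 : ∀ vb ∈ Kset X0 X1 α β b,
      Kfun X0 X1 α β (a + b) - vb ≤ Kfun X0 X1 α β a := by
    intro vb hvb
    refine le_csInf (Kset_ne_of_mem X0 X1 ha) fun va hva => ?_
    linarith [core va hva vb hvb]
  have step2 : Kfun X0 X1 α β (a + b) - Kfun X0 X1 α β a ≤ Kfun X0 X1 α β b := by
    refine le_csInf (Kset_ne_of_mem X0 X1 hb) fun vb hvb => ?_
    linarith [step1 vb hvb]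
  linarith

/-- scaling -/
lemma Kfun_smul (hα : 0 ≤ α) (hβ : 0 ≤ β) {a : ℝ → ℝ} (ha : X0.Mem a) (c : ℝ) :
    Kfun X0 X1 α β (fun t => c * a t) ≤ |c| * Kfun X0 X1 α β a := by
  by_cases hc : c = 0
  · subst hc
    simp only [zero_mul, abs_zero]
    have : Kfun X0 X1 α β (fun _ => (0:ℝ)) ≤ α * X0.N 0 :=
      Kfun_le_left X0 X1 hα hβ (show X0.Mem (fun _ => (0:ℝ)) from X0.zero_mem)
    rw [X0.zero_norm] at this
    simpa using this
  · have key : ∀ v ∈ Kset X0 X1 α β a, Kfun X0 X1 α β (fun t => c * a t) ≤ |c| * v := by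
      rintro v ⟨a0, a1, h0, h1, hdec, rfl⟩
      have hdec' : (fun t => c * a t) = (c • a0) + (c • a1) := by
        funext t
        have := congrFun hdec t
        simp only [Pi.add_apply, Pi.smul_apply, smul_eq_mul] at this ⊢
        rw [this]; ring
      have hmemv : α * X0.N (c • a0) + β * X1.N (c • a1)
          ∈ Kset X0 X1 α β (fun t => c * a t) :=
        ⟨_, _, X0.smul_mem c _ h0, X1.smul_mem c _ h1, hdec', rfl⟩
      have := csInf_le (Kset_bdd X0 X1 hα hβ) hmemv
      rw [X0.smul_norm c _ h0, X1.smul_norm c _ h1] at this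
      calc Kfun X0 X1 α β (fun t => c * a t) ≤ α * (|c| * X0.N a0) + β * (|c| * X1.N a1) := this
        _ = |c| * (α * X0.N a0 + β * X1.N a1) := by ring
    have hcpos : 0 < |c| := abs_pos.mpr hc
    have : Kfun X0 X1 α β (fun t => c * a t) / |c| ≤ Kfun X0 X1 α β a := by
      refine le_csInf (Kset_ne_of_mem X0 X1 ha) fun v hv => ?_
      rw [div_le_iff₀ hcpos]
      rw [mul_comm]
      exact key v hv
    rw [div_le_iff₀ hcpos] at this
    linarith [this]

lemma Kfun_smul_ge (hα : 0 ≤ α) (hβ : 0 ≤ β) {a : ℝ → ℝ} (ha : X0.Mem a) {c : ℝ} (hc : c ≠ 0) :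
    |c| * Kfun X0 X1 α β a ≤ Kfun X0 X1 α β (fun t => c * a t) := by
  have hmem' : X0.Mem (fun t => c * a t) := by
    have h := X0.smul_mem c a ha
    have : c • a = fun t => c * a t := by
      funext t; simp [Pi.smul_apply, smul_eq_mul]
    rwa [this] at h
  have h2 := Kfun_smul X0 X1 hα hβ hmem' c⁻¹
  have heq : (fun t => c⁻¹ * (c * a t)) = a := by
    funext t; field_simp
  rw [heq, abs_inv] at h2
  rw [← le_div_iff₀' (abs_pos.mpr hc)]
  rw [div_eq_inv_mul]
  exact h2

/-- finset subadditivity -/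
lemma Kfun_sum (hα : 0 ≤ α) (hβ : 0 ≤ β) {ι : Type*} (F : Finset ι) (f : ι → ℝ → ℝ) (hf : ∀ n ∈ F, X0.Mem (f n)) :
    X0.Mem (fun t => ∑ n ∈ F, f n t) ∧
    Kfun X0 X1 α β (fun t => ∑ n ∈ F, f n t) ≤ ∑ n ∈ F, Kfun X0 X1 α β (f n) := by
  classical
  induction F using Finset.induction with
  | empty =>
    constructor
    · convert X0.zero_mem using 1; funext t; simp
    · simp only [Finset.sum_empty]
      have : Kfun X0 X1 α β (fun _ => (0:ℝ)) ≤ α * X0.N 0 :=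
        Kfun_le_left X0 X1 hα hβ (show X0.Mem (fun _ => (0:ℝ)) from X0.zero_mem)
      rw [X0.zero_norm] at this
      simpa using this
  | @insert a F' hx ih =>
    have hf' : ∀ n ∈ F', X0.Mem (f n) := fun n hn => hf n (Finset.mem_insert_of_mem hn)
    obtain ⟨ihmem, ihle⟩ := ih hf'
    have hfa' : X0.Mem (f a) := hf a (Finset.mem_insert_self a F')
    have hsum_eq : (fun t => ∑ n ∈ insert a F', f n t)
        = f a + (fun t => ∑ n ∈ F', f n t) := by
      funext t
      simp [Finset.sum_insert hx]
    constructor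
    · rw [hsum_eq]; exact X0.add_mem _ _ hfa' ihmem
    · rw [hsum_eq, Finset.sum_insert hx]
      calc Kfun X0 X1 α β (f a + fun t => ∑ n ∈ F', f n t)
          ≤ Kfun X0 X1 α β (f a) + Kfun X0 X1 α β (fun t => ∑ n ∈ F', f n t) :=
            Kfun_add X0 X1 hα hβ hfa' ihmem
        _ ≤ Kfun X0 X1 α β (f a) + ∑ n ∈ F', Kfun X0 X1 α β (f n) := by linarith

end Klemmas
/-- quarter lower bound for the K-functional of an indicator -/
lemma Kfun_lower (X0 X1 : RIS (Set.Icc (0:ℝ) 1))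
    (hemb : ∀ f, X0.Mem f → X1.Mem f ∧ X1.N f ≤ X0.N f)
    (hconst : X0.Mem (ind (Set.Icc 0 1)))
    {A : Set ℝ} (hA : MeasurableSet A) (hAI : A ⊆ Set.Icc 0 1)
    {v : ℝ} (hv0 : 0 < v) (hv1 : v ≤ 1) (hvol : volume A = ENNReal.ofReal v)
    {α β : ℝ} (hα : 0 ≤ α) (hβ : 0 ≤ β) :
    (1/4) * min (α * phi X0 v) (β * phi X1 v) ≤ Kfun X0.toBFL X1.toBFL α β (ind A) := by
  classical
  have hI1 : X1.Mem (ind (Set.Icc 0 1)) := (hemb _ hconst).1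
  have hIm : MeasurableSet (Set.Icc (0:ℝ) 1) := measurableSet_Icc
  have hindA : X0.Mem (ind A) := ind_mem X0 hconst hA hAI
  rw [Kfun_eq]
  refine le_csInf (Kset_ne_of_mem X0.toBFL X1.toBFL hindA) ?_
  rintro v' ⟨a0, a1, h0, h1, hdec, rfl⟩
  set μ := volume.restrict (Set.Icc (0:ℝ) 1) with hμ
  have ha0m : AEMeasurable a0 μ := X0.mem_meas a0 h0
  set g := ha0m.mk a0 with hg
  have hgm : Measurable g := ha0m.measurable_mk
  have hae : a0 =ᵐ[μ] g := ha0m.ae_eq_mk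
  set C : Set ℝ := {t | (1/2 : ℝ) ≤ |g t|} with hC
  have hCm : MeasurableSet C := measurableSet_le measurable_const hgm.abs
  have hvolAC : ∀ B : Set ℝ, B ⊆ Set.Icc 0 1 → μ B = volume B := by
    intro B hB
    rw [hμ, Measure.restrict_apply' hIm, Set.inter_eq_self_of_subset_left hB]
  have hsplit : μ (A ∩ C) + μ (A \ C) = μ A := measure_inter_add_diff A hCm
  have hμA : μ A = ENNReal.ofReal v := by rw [hvolAC A hAI, hvol]
  have hfin : ∀ B : Set ℝ, B ⊆ Set.Icc 0 1 → volume B ≠ ⊤ := by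
    intro B hB
    have : volume B ≤ volume (Set.Icc (0:ℝ) 1) := measure_mono hB
    rw [Real.volume_Icc] at this
    exact ne_top_of_le_ne_top (by norm_num) this
  have hvle1 : ∀ B : Set ℝ, B ⊆ Set.Icc 0 1 → volume B ≤ ENNReal.ofReal 1 := by
    intro B hB
    have h := measure_mono (μ := volume) hB
    rwa [Real.volume_Icc, sub_zero] at h
  have hBsub : A ∩ C ⊆ Set.Icc 0 1 := fun t ht => hAI ht.1
  have hDsub : A \ C ⊆ Set.Icc 0 1 := fun t ht => hAI ht.1
  -- common bound extractor
  have key : ∀ (X : RIS (Set.Icc (0:ℝ) 1)) (hXI : X.Mem (ind (Set.Icc 0 1)))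
      (b : ℝ → ℝ) (hbmem : X.Mem b) (B : Set ℝ) (hBm : MeasurableSet B)
      (hBI : B ⊆ Set.Icc 0 1) (hBv : ENNReal.ofReal (v/2) ≤ volume B) (hBv1 : volume B ≤ ENNReal.ofReal 1)
      (hble : ∀ᵐ t ∂μ, t ∈ B → (1/2:ℝ) ≤ |b t|),
      phi X v / 4 ≤ X.N b := by
    intro X hXI b hbmem B hBm hBI hBv hBv1 hble
    set w := (volume B).toReal with hw
    have hwv : v/2 ≤ w := by
      have := ENNReal.toReal_mono (hfin B hBI) hBv
      rwa [ENNReal.toReal_ofReal (by linarith)] at this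
    have hw1 : w ≤ 1 := by
      have := ENNReal.toReal_mono (by norm_num) hBv1
      rwa [ENNReal.toReal_ofReal (by norm_num)] at this
    have hNindB : X.N (ind B) = phi X w :=
      ind_norm X hXI hBm hBI (by linarith) hw1
        (by rw [hw, ENNReal.ofReal_toReal (hfin B hBI)])
    have hmemB : X.Mem (ind B) := ind_mem X hXI hBm hBI
    have hideal := X.ideal (fun t => (1/2:ℝ) * ind B t) b
      (((ind_meas hBm).const_mul _).aemeasurable) ?_ hbmem
    · have hNf : X.N (fun t => (1/2:ℝ) * ind B t) = (1/2) * phi X w := by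
        have : (fun t => (1/2:ℝ) * ind B t) = (1/2:ℝ) • ind B := by
          funext t; simp [Pi.smul_apply, smul_eq_mul]
        rw [this, X.smul_norm _ _ hmemB, hNindB]
        norm_num
      have h2 : phi X (v/2) ≤ phi X w := phi_mono X hXI hwv hw1
      have h3 : phi X v ≤ 2 * phi X (v/2) := by
        have := phi_subadd X hXI (by linarith : (0:ℝ) ≤ v/2) (by linarith : (0:ℝ) ≤ v/2)
          (by linarith)
        have hvv : v/2 + v/2 = v := by ring
        rw [hvv] at this
        linarith
      have h4 := hideal.2
      rw [hNf] at h4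
      linarith
    · filter_upwards [hble] with t ht
      by_cases htB : t ∈ B
      · have : ind B t = 1 := by simp [ind, Set.indicator_apply, htB]
        rw [this]
        rw [abs_of_nonneg (by norm_num : (0:ℝ) ≤ 1/2 * 1)]
        simpa using ht htB
      · have : ind B t = 0 := by simp [ind, Set.indicator_apply, htB]
        rw [this]
        simp [abs_nonneg]
  by_cases hcase : ENNReal.ofReal (v/2) ≤ μ (A ∩ C)
  · -- a0 is large on a set of measure ≥ v/2
    have hble : ∀ᵐ t ∂μ, t ∈ A ∩ C → (1/2:ℝ) ≤ |a0 t| := by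
      filter_upwards [hae] with t hta ht
      rw [hta]; exact ht.2
    have hb := key X0 hconst a0 h0 (A ∩ C) (hA.inter hCm) hBsub
      (by rwa [hvolAC _ hBsub] at hcase)
      (hvle1 _ hBsub) hble
    have hmin : min (α * phi X0 v) (β * phi X1 v) ≤ α * phi X0 v := min_le_left _ _
    have h5 : 0 ≤ β * X1.N a1 := mul_nonneg hβ (X1.nonneg a1)
    have h6 := mul_le_mul_of_nonneg_left hb hα
    nlinarith
  · -- a1 is large on a set of measure ≥ v/2
    push_neg at hcase
    have hcase2 : ENNReal.ofReal (v/2) ≤ μ (A \ C) := by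
      by_contra h
      push_neg at h
      have := ENNReal.add_lt_add hcase h
      rw [hsplit, hμA] at this
      rw [← ENNReal.ofReal_add (by linarith) (by linarith)] at this
      have hvv : v/2 + v/2 = v := by ring
      rw [hvv] at this
      exact lt_irrefl _ this
    have hble : ∀ᵐ t ∂μ, t ∈ A \ C → (1/2:ℝ) ≤ |a1 t| := by
      filter_upwards [hae] with t hta ht
      have htA : t ∈ A := ht.1
      have htC : ¬ ((1/2:ℝ) ≤ |g t|) := ht.2
      push_neg at htC
      have heq : ind A t = a0 t + a1 t := by
        have := congrFun hdec t
        simpa using this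
      have hA1 : ind A t = 1 := by simp [ind, Set.indicator_apply, htA]
      rw [hA1] at heq
      have ha0small : |a0 t| < 1/2 := by rw [hta]; exact htC
      have : a1 t = 1 - a0 t := by linarith
      rw [this]
      have habs := abs_sub_abs_le_abs_sub (1:ℝ) (a0 t)
      rw [abs_one] at habs
      linarith
    have hb := key X1 hI1 a1 h1 (A \ C) (hA.diff hCm) hDsub
      (by rwa [hvolAC _ hDsub] at hcase2)
      (hvle1 _ hDsub) hble
    have hmin : min (α * phi X0 v) (β * phi X1 v) ≤ β * phi X1 v := min_le_right _ _
    have h5 : 0 ≤ α * X0.N a0 := mul_nonneg hα (X0.nonneg a0)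
    have h6 := mul_le_mul_of_nonneg_left hb hβ
    nlinarith
lemma seq_single_norm (E : SeqSpace) (j : ℕ) (c : ℝ) :
    E.Mem (Pi.single j c) ∧ E.N (Pi.single j c) = |c| := by
  have heq : (Pi.single j c : ℕ → ℝ) = c • (Pi.single j (1:ℝ) : ℕ → ℝ) := by
    funext n
    by_cases h : n = j
    · subst h; simp
    · simp [Pi.single_apply, h]
  rw [heq]
  refine ⟨E.smul_mem _ _ (E.unit_mem j), ?_⟩
  rw [E.smul_norm _ _ (E.unit_mem j), E.unit_norm]
  simp

lemma seq_coord (E : SeqSpace) {f : ℕ → ℝ} (hf : E.Mem f) (j : ℕ) : |f j| ≤ E.N f := by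
  have h := E.mono (Pi.single j (f j)) f ?_ hf
  · have := (seq_single_norm E j (f j)).2
    calc |f j| = E.N (Pi.single j (f j)) := this.symm
      _ ≤ E.N f := h.2
  · intro n
    by_cases h : n = j
    · subst h; simp
    · simp [Pi.single_apply, h, abs_nonneg]

lemma tsum_gt_shift (m : ℕ → ℝ) (n : ℕ) (hm : Summable fun i => (m i)⁻¹)
    (hpos : ∀ i, 0 ≤ (m i)⁻¹) :
    ∑' j, (if n < j then (m j)⁻¹ else 0) = ∑' i, (m (n + 1 + i))⁻¹ := by
  have hs : Summable (fun j => if n < j then (m j)⁻¹ else 0) := by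
    refine Summable.of_nonneg_of_le (fun j => ?_) (fun j => ?_) hm
    · by_cases h : n < j
      · rw [if_pos h]; exact hpos j
      · rw [if_neg h]
    · by_cases h : n < j
      · rw [if_pos h]
      · rw [if_neg h]; exact hpos j
  have key := Summable.sum_add_tsum_nat_add (f := fun j => if n < j then (m j)⁻¹ else 0) (n+1) hs
  have h1 : ∑ i ∈ Finset.range (n+1), (if n < i then (m i)⁻¹ else 0) = 0 := by
    apply Finset.sum_eq_zero
    intro i hi
    exact if_neg (not_lt.mpr (Nat.lt_succ_iff.mp (Finset.mem_range.mp hi)))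
  have h2 : (fun i => if n < i + (n+1) then (m (i + (n+1)))⁻¹ else 0)
      = fun i => (m (n + 1 + i))⁻¹ := by
    funext i
    rw [if_pos (by omega), Nat.add_comm i (n+1)]
  rw [h1, zero_add] at key
  rw [← key, h2]
set_option maxHeartbeats 2000000 in
/-- Proposition 1 of the paper. In the Lions–Peetre space
`W = W_E^K(X₀,X₁)` (with `X₀ ⊂ X₁` strictly embedded r.i. spaces on `[0,1]`, fundamental
functions normalized at `1`, and parameters satisfying the rapid growth condition) there
exist pairwise disjoint measurable sets `A_n ⊆ [0,1]` such that the normalized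
characteristic functions `χ_{A_n}/‖χ_{A_n}‖_W` form a sequence equivalent in `W` to the
basis `{e_n}` of `E`. -/
theorem stmt10 (X0 X1 : RIS (Set.Icc (0:ℝ) 1))
    (hemb : ∀ f, X0.Mem f → X1.Mem f ∧ X1.N f ≤ X0.N f)
    (hstrict : StrictEmb X0 X1)
    (hconst : X0.Mem ((Set.Icc (0:ℝ) 1).indicator fun _ => (1:ℝ)))
    (h0 : fund X0 1 = 1) (h1 : fund X1 1 = 1)
    (m : ℕ → ℝ) (hmono : StrictMono m) (hm0 : 2 ≤ m 0)
    (hmsum : Summable fun i => (m i)⁻¹)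
    (hgrow : ∀ n, (m n)⁻¹ * ∑ i ∈ Finset.range n, m i
        + m n * ∑' i : ℕ, (m (n + 1 + i))⁻¹ < (2:ℝ) ^ (-(n:ℤ) - 2))
    (E : SeqSpace) :
    ∃ A : ℕ → Set ℝ, (∀ n, MeasurableSet (A n)) ∧ (∀ n, A n ⊆ Set.Icc 0 1) ∧
      (Pairwise fun i j => Disjoint (A i) (A j)) ∧
      (∀ n, 0 < E.N (LPvec X0.toBFL X1.toBFL m ((A n).indicator fun _ => (1:ℝ)))) ∧
      ∃ C : ℝ, 0 < C ∧ ∀ c : ℕ →₀ ℝ,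
        C⁻¹ * E.N (fun n => c n)
            ≤ E.N (LPvec X0.toBFL X1.toBFL m (fun t => ∑ n ∈ c.support,
                (c n / E.N (LPvec X0.toBFL X1.toBFL m ((A n).indicator fun _ => (1:ℝ))))
                  * (A n).indicator (fun _ => (1:ℝ)) t)) ∧
        E.N (LPvec X0.toBFL X1.toBFL m (fun t => ∑ n ∈ c.support,
                (c n / E.N (LPvec X0.toBFL X1.toBFL m ((A n).indicator fun _ => (1:ℝ))))
                  * (A n).indicator (fun _ => (1:ℝ)) t))
            ≤ C * E.N (fun n => c n) := by
  classical
  have hconst' : X0.Mem (ind (Set.Icc 0 1)) := hconst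
  have hI1 : X1.Mem (ind (Set.Icc 0 1)) := (hemb _ hconst').1
  have h0' : phi X0 1 = 1 := h0
  have h1' : phi X1 1 = 1 := h1
  -- basic facts about m
  have hm2 : ∀ n, 2 ≤ m n := fun n => le_trans hm0 (hmono.monotone (Nat.zero_le n))
  have hmpos : ∀ n, 0 < m n := fun n => lt_of_lt_of_le two_pos (hm2 n)
  have hminv : ∀ n, 0 ≤ (m n)⁻¹ := fun n => inv_nonneg.mpr (hmpos n).le
  -- powers of two
  have z3 : ∀ n : ℕ, (2:ℝ) ^ (-(n:ℤ) - 2) = (1/4) * (1/2)^n := by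
    intro n
    rw [sub_eq_add_neg, add_comm, zpow_add₀ (two_ne_zero), zpow_neg, zpow_neg,
      zpow_natCast]
    norm_num
    rw [div_pow, one_pow, one_div]
  have z1 : ∀ n : ℕ, (0:ℝ) < 2 ^ (-(n:ℤ) - 2) := fun n => by
    rw [z3]; positivity
  have z2 : ∀ n : ℕ, (2:ℝ) ^ (-(n:ℤ) - 2) ≤ 1/4 := by
    intro n
    rw [z3]
    have h : ((1:ℝ)/2)^n ≤ 1 := pow_le_one₀ (by norm_num) (by norm_num)
    nlinarith
  -- choose the measures t n
  have hsel : ∀ n : ℕ, ∃ s, 0 < s ∧ s ≤ 2 * ((m n)^2)⁻¹ ∧ s < 1 ∧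
      (((m n)^2)⁻¹/2) * phi X0 s ≤ phi X1 s ∧ phi X1 s ≤ ((m n)^2)⁻¹ * phi X0 s := by
    intro n
    have hε0 : 0 < ((m n)^2)⁻¹ := inv_pos.mpr (pow_pos (hmpos n) 2)
    have hε1 : ((m n)^2)⁻¹ < 1 := by
      rw [inv_lt_one_iff₀]
      right
      nlinarith [hm2 n]
    exact ratio_select X0 X1 hstrict hconst' hI1 h0' h1' hε0 hε1
  choose t ht0 htsmall ht1 htlow hthigh using hsel
  have htm : ∀ n, t n ≤ (m n)⁻¹ := by
    intro n
    have h := htsmall n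
    have h2 := hm2 n
    have hp := hmpos n
    rw [show ((m n)^2)⁻¹ = (m n)⁻¹ * (m n)⁻¹ by rw [sq, mul_inv]] at h
    calc t n ≤ 2 * ((m n)⁻¹ * (m n)⁻¹) := h
      _ ≤ 2 * ((1/2) * (m n)⁻¹) := by
          have : (m n)⁻¹ ≤ 1/2 := by
            rw [inv_le_comm₀ hp (by norm_num)]
            linarith
          nlinarith [hminv n]
      _ = (m n)⁻¹ := by ring
  -- partial sums stay below 1
  have hStail_nonneg : (0:ℝ) ≤ ∑' i, (m (1 + i))⁻¹ :=
    tsum_nonneg fun i => hminv _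
  have hMtail : ∑' i, (m (1 + i))⁻¹ ≤ 1/8 := by
    have hg := hgrow 0
    simp only [Finset.range_zero, Finset.sum_empty, mul_zero, zero_add, Nat.zero_add,
      Nat.cast_zero, neg_zero, zero_sub] at hg
    have h14 : (2:ℝ) ^ (-2 : ℤ) = 1/4 := by norm_num
    rw [h14] at hg
    nlinarith [hm0, hStail_nonneg]
  have hM : ∑' i, (m i)⁻¹ ≤ 1 := by
    have hz := Summable.tsum_eq_zero_add hmsum
    have hcongr : ∑' i, (m (i + 1))⁻¹ = ∑' i, (m (1 + i))⁻¹ := by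
      congr 1
      funext i
      rw [Nat.add_comm]
    rw [hz, hcongr]
    have hm0inv : (m 0)⁻¹ ≤ 1/2 := by
      rw [inv_le_comm₀ (hmpos 0) (by norm_num)]
      linarith [hm0]
    linarith [hMtail]
  set a : ℕ → ℝ := fun n => ∑ i ∈ Finset.range n, t i with ha
  have ha_nonneg : ∀ n, 0 ≤ a n := fun n =>
    Finset.sum_nonneg fun i _ => (ht0 i).le
  have ha_succ : ∀ n, a (n+1) = a n + t n := fun n => Finset.sum_range_succ t n
  have ha_le : ∀ n, a n + t n ≤ 1 := by
    intro n
    have h1 : a n + t n = ∑ i ∈ Finset.range (n+1), t i := (Finset.sum_range_succ t n).symm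
    have h2 : ∑ i ∈ Finset.range (n+1), t i ≤ ∑ i ∈ Finset.range (n+1), (m i)⁻¹ :=
      Finset.sum_le_sum fun i _ => htm i
    have h3 : ∑ i ∈ Finset.range (n+1), (m i)⁻¹ ≤ ∑' i, (m i)⁻¹ :=
      Summable.sum_le_tsum _ (fun i _ => hminv i) hmsum
    linarith
  have ha_mono : ∀ {i j}, i ≤ j → a i ≤ a j := by
    intro i j hij
    apply Finset.sum_le_sum_of_subset_of_nonneg (Finset.range_subset_range.mpr hij)
    intro k _ _
    exact (ht0 k).le
  set A : ℕ → Set ℝ := fun n => Set.Ico (a n) (a n + t n) with hA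
  have hAmeas : ∀ n, MeasurableSet (A n) := fun n => measurableSet_Ico
  have hAsub : ∀ n, A n ⊆ Set.Icc 0 1 := by
    intro n x hx
    exact ⟨le_trans (ha_nonneg n) hx.1, le_trans hx.2.le (ha_le n)⟩
  have hAdisj : Pairwise fun i j => Disjoint (A i) (A j) := by
    have key : ∀ {i j}, i < j → Disjoint (A i) (A j) := by
      intro i j hij
      rw [Set.disjoint_left]
      intro x hxi hxj
      have h1 : x < a i + t i := hxi.2
      have h2 : a i + t i = a (i+1) := (ha_succ i).symm
      have h3 : a (i+1) ≤ a j := ha_mono hij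
      have h4 : a j ≤ x := hxj.1
      linarith
    intro i j hij
    rcases lt_or_gt_of_ne hij with h | h
    · exact key h
    · exact (key h).symm
  have hAvol : ∀ n, volume (A n) = ENNReal.ofReal (t n) := by
    intro n
    rw [hA]
    simp only [Real.volume_Ico, add_sub_cancel_left]
  -- diagonal quantities
  set φ : ℕ → ℝ := fun n => phi X0 (t n) with hφ
  have hφpos : ∀ n, 0 < φ n := fun n => phi_pos X0 hconst' h0' (ht0 n) (ht1 n).le
  set d : ℕ → ℝ := fun n => (m n)⁻¹ * φ n with hd
  have hdpos : ∀ n, 0 < d n := fun n => mul_pos (inv_pos.mpr (hmpos n)) (hφpos n)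
  set u : ℕ → ℕ → ℝ := fun n => LPvec X0.toBFL X1.toBFL m ((A n).indicator fun _ => (1:ℝ))
    with hu
  have humem : ∀ n, X0.Mem (ind (A n)) := fun n =>
    ind_mem X0 hconst' (hAmeas n) (hAsub n)
  have hN0A : ∀ n, X0.N (ind (A n)) = φ n := fun n =>
    ind_norm X0 hconst' (hAmeas n) (hAsub n) (ht0 n).le (ht1 n).le (hAvol n)
  have hN1A : ∀ n, X1.N (ind (A n)) = phi X1 (t n) := fun n =>
    ind_norm X1 hI1 (hAmeas n) (hAsub n) (ht0 n).le (ht1 n).le (hAvol n)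
  have hu_eq : ∀ n j, u n j = Kfun X0.toBFL X1.toBFL (m j)⁻¹ (m j) (ind (A n)) :=
    fun n j => rfl
  have hu_nonneg : ∀ n j, 0 ≤ u n j := fun n j =>
    Kfun_nonneg _ _ (hminv j) (hmpos j).le _
  have hu_le0 : ∀ n j, u n j ≤ (m j)⁻¹ * φ n := by
    intro n j
    rw [hu_eq]
    calc Kfun X0.toBFL X1.toBFL (m j)⁻¹ (m j) (ind (A n))
        ≤ (m j)⁻¹ * X0.N (ind (A n)) :=
          Kfun_le_left _ _ (hminv j) (hmpos j).le (humem n)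
      _ = (m j)⁻¹ * φ n := by rw [hN0A]
  have hdiag_hi : ∀ n, u n n ≤ d n := fun n => hu_le0 n n
  have hdiag_lo : ∀ n, d n / 8 ≤ u n n := by
    intro n
    have hK := Kfun_lower X0 X1 hemb hconst' (hAmeas n) (hAsub n) (ht0 n) (ht1 n).le
      (hAvol n) (hminv n) (hmpos n).le
    have hmne : m n ≠ 0 := ne_of_gt (hmpos n)
    have hmin : d n / 2 ≤ min ((m n)⁻¹ * phi X0 (t n)) (m n * phi X1 (t n)) := by
      refine le_min ?_ ?_
      · have : d n = (m n)⁻¹ * phi X0 (t n) := rfl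
        rw [← this]
        linarith [hdpos n]
      · have hlow := htlow n
        have h5 := mul_le_mul_of_nonneg_left hlow (hmpos n).le
        have heq : m n * (((m n)^2)⁻¹/2 * phi X0 (t n)) = d n / 2 := by
          rw [hd]
          field_simp
          ring
        rw [heq] at h5
        exact h5
    have h6 : d n / 8 = (1/4) * (d n / 2) := by ring
    rw [hu_eq, h6]
    calc (1/4) * (d n / 2)
        ≤ (1/4) * min ((m n)⁻¹ * phi X0 (t n)) (m n * phi X1 (t n)) := by linarith [hmin]
      _ ≤ Kfun X0.toBFL X1.toBFL (m n)⁻¹ (m n) (ind (A n)) := hK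
  -- off-diagonal upper bounds
  set ub : ℕ → ℕ → ℝ := fun n j =>
    (if j < n then m j * ((m n)^2)⁻¹ * φ n else 0)
    + (if n < j then (m j)⁻¹ * φ n else 0) with hub
  have hub_nonneg : ∀ n j, 0 ≤ ub n j := by
    intro n j
    rw [hub]
    have := hminv j
    have := (hmpos j).le
    have := (hφpos n).le
    positivity
  have hu_le_ub : ∀ n j, j ≠ n → u n j ≤ ub n j := by
    intro n j hjn
    rcases lt_or_gt_of_ne hjn with h | h
    · -- j < n
      rw [hub]
      simp only [if_pos h, if_neg (by omega : ¬ n < j), add_zero]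
      have hmem1 : X1.Mem (ind (A n)) := (hemb _ (humem n)).1
      have hle := Kfun_le_right X0.toBFL X1.toBFL (hminv j) (hmpos j).le hmem1
      rw [hu_eq]
      calc Kfun X0.toBFL X1.toBFL (m j)⁻¹ (m j) (ind (A n))
          ≤ m j * X1.N (ind (A n)) := hle
        _ = m j * phi X1 (t n) := by rw [hN1A]
        _ ≤ m j * (((m n)^2)⁻¹ * phi X0 (t n)) :=
            mul_le_mul_of_nonneg_left (hthigh n) (hmpos j).le
        _ = m j * ((m n)^2)⁻¹ * φ n := by rw [hφ, mul_assoc]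
    · -- n < j
      rw [hub]
      simp only [if_neg (by omega : ¬ j < n), if_pos h, zero_add]
      exact hu_le0 n j
  have hf1_summable : ∀ n, Summable (fun j => if j < n then m j * ((m n)^2)⁻¹ * φ n else 0) := by
    intro n
    apply summable_of_ne_finset_zero (s := Finset.range n)
    intro b hb
    rw [if_neg (by simpa using hb)]
  have hf2_summable : ∀ n, Summable (fun j => if n < j then (m j)⁻¹ * φ n else 0) := by
    intro n
    refine Summable.of_nonneg_of_le (fun j => ?_) (fun j => ?_) (hmsum.mul_right (φ n))
    · by_cases h : n < j
      · rw [if_pos h]; exact mul_nonneg (hminv j) (hφpos n).le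
      · rw [if_neg h]
    · by_cases h : n < j
      · rw [if_pos h]
      · rw [if_neg h]; exact mul_nonneg (hminv j) (hφpos n).le
  have hub_summable : ∀ n, Summable (ub n) := fun n =>
    (hf1_summable n).add (hf2_summable n)
  have hub_tsum : ∀ n, ∑' j, ub n j ≤ d n * (2:ℝ)^(-(n:ℤ)-2) := by
    intro n
    have hmne : m n ≠ 0 := ne_of_gt (hmpos n)
    have hsplit : ∑' j, ub n j
        = (∑' j, (if j < n then m j * ((m n)^2)⁻¹ * φ n else 0))
          + ∑' j, (if n < j then (m j)⁻¹ * φ n else 0) := by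
      rw [hub]
      exact Summable.tsum_add (hf1_summable n) (hf2_summable n)
    have hS1 : ∑' j, (if j < n then m j * ((m n)^2)⁻¹ * φ n else 0)
        = (∑ j ∈ Finset.range n, m j) * (((m n)^2)⁻¹ * φ n) := by
      rw [tsum_eq_sum (s := Finset.range n) (fun b hb => if_neg (by simpa using hb))]
      rw [Finset.sum_mul]
      apply Finset.sum_congr rfl
      intro j hj
      rw [if_pos (Finset.mem_range.mp hj), mul_assoc]
    have hS2 : ∑' j, (if n < j then (m j)⁻¹ * φ n else 0)
        = (∑' i, (m (n + 1 + i))⁻¹) * φ n := by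
      have hfactor : (fun j => if n < j then (m j)⁻¹ * φ n else 0)
          = fun j => (if n < j then (m j)⁻¹ else 0) * φ n := by
        funext j
        by_cases h : n < j
        · rw [if_pos h, if_pos h]
        · rw [if_neg h, if_neg h, zero_mul]
      rw [hfactor, tsum_mul_right, tsum_gt_shift m n hmsum hminv]
    rw [hsplit, hS1, hS2]
    have heq : (∑ j ∈ Finset.range n, m j) * (((m n)^2)⁻¹ * φ n)
        + (∑' i, (m (n + 1 + i))⁻¹) * φ n
        = d n * ((m n)⁻¹ * ∑ i ∈ Finset.range n, m i
            + m n * ∑' i : ℕ, (m (n + 1 + i))⁻¹) := by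
      rw [hd]
      field_simp
    rw [heq]
    exact mul_le_mul_of_nonneg_left (hgrow n).le (hdpos n).le
  -- the u n are summable with controlled sums
  have hu_summable : ∀ n, Summable (u n) := by
    intro n
    refine Summable.of_nonneg_of_le (hu_nonneg n) (hu_le0 n) ?_
    exact hmsum.mul_right _
  have hdiag_summable : ∀ n, Summable (fun j => if j = n then d n else 0) := by
    intro n
    apply summable_of_ne_finset_zero (s := {n})
    intro b hb
    rw [if_neg (by simpa using hb)]
  have hu_tsum : ∀ n, ∑' j, u n j ≤ (5/4) * d n := by
    intro n
    have hle : ∀ j, u n j ≤ (if j = n then d n else 0) + ub n j := by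
      intro j
      by_cases h : j = n
      · rw [if_pos h, h]
        have := hub_nonneg n n
        linarith [hdiag_hi n]
      · rw [if_neg h, zero_add]
        exact hu_le_ub n j h
    have hsum2 : Summable (fun j => (if j = n then d n else 0) + ub n j) :=
      (hdiag_summable n).add (hub_summable n)
    have h1 : ∑' j, u n j ≤ ∑' j, ((if j = n then d n else 0) + ub n j) :=
      Summable.tsum_le_tsum hle (hu_summable n) hsum2
    have h2 : ∑' j, ((if j = n then d n else 0) + ub n j)
        = d n + ∑' j, ub n j := by
      rw [Summable.tsum_add (hdiag_summable n) (hub_summable n), tsum_ite_eq]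
    have h3 := hub_tsum n
    have h4 := z2 n
    have h5 := hdpos n
    nlinarith
  -- norms w n
  set w : ℕ → ℝ := fun n =>
    E.N (LPvec X0.toBFL X1.toBFL m ((A n).indicator fun _ => (1:ℝ))) with hwdef
  have hw_eq : ∀ n, w n = E.N (u n) := fun n => rfl
  have humemE : ∀ n, E.Mem (u n) ∧ E.N (u n) ≤ ∑' j, u n j := by
    intro n
    have habs : (fun j => |u n j|) = u n := by
      funext j; exact abs_of_nonneg (hu_nonneg n j)
    have h := E.abs_le (u n) (by rw [habs]; exact hu_summable n)
    rwa [habs] at h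
  have hw_hi : ∀ n, w n ≤ (5/4) * d n := fun n =>
    le_trans ((humemE n).2) (hu_tsum n)
  have hw_lo : ∀ n, d n / 8 ≤ w n := by
    intro n
    calc d n / 8 ≤ u n n := hdiag_lo n
      _ = |u n n| := (abs_of_nonneg (hu_nonneg n n)).symm
      _ ≤ E.N (u n) := seq_coord E (humemE n).1 n
  have hw_pos : ∀ n, 0 < w n := fun n => lt_of_lt_of_le (div_pos (hdpos n) (by norm_num)) (hw_lo n)
  have hd_le_w : ∀ n, d n ≤ 8 * w n := by
    intro n
    have := hw_lo n
    linarith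
  refine ⟨A, hAmeas, hAsub, hAdisj, fun n => hw_pos n, 12, by norm_num, ?_⟩
  intro c
  -- coefficient sequence facts
  have hcsum : Summable (fun n => |(c n : ℝ)|) := by
    apply summable_of_ne_finset_zero (s := c.support)
    intro b hb
    simp [Finsupp.notMem_support_iff.mp hb]
  have hcmem : E.Mem (fun n => (c n : ℝ)) := (E.abs_le _ hcsum).1
  have hcoord : ∀ n, |(c n : ℝ)| ≤ E.N (fun n => (c n : ℝ)) := fun n => seq_coord E hcmem n
  have hcN_nonneg : 0 ≤ E.N (fun n => (c n : ℝ)) := E.nonneg _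
  set F := c.support with hF
  set y : ℝ → ℝ := fun t => ∑ n ∈ c.support,
      (c n / E.N (LPvec X0.toBFL X1.toBFL m ((A n).indicator fun _ => (1:ℝ))))
        * (A n).indicator (fun _ => (1:ℝ)) t with hy
  set V : ℕ → ℝ := LPvec X0.toBFL X1.toBFL m y with hV
  have hyF : y = fun t => ∑ n ∈ F, (c n / w n) * ind (A n) t := rfl
  have hVj : ∀ j, V j = Kfun X0.toBFL X1.toBFL (m j)⁻¹ (m j) y := fun j => rfl
  have hfmem : ∀ n, X0.Mem (fun t => (c n / w n) * ind (A n) t) := by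
    intro n
    have h := X0.smul_mem (c n / w n) _ (humem n)
    have heq : (c n / w n) • ind (A n) = fun t => (c n / w n) * ind (A n) t := by
      funext t; simp [Pi.smul_apply, smul_eq_mul]
    rwa [heq] at h
  have hymem : X0.Mem y := by
    rw [hyF]
    exact (Kfun_sum X0.toBFL X1.toBFL (hminv 0) (hmpos 0).le F _ (fun n _ => hfmem n)).1
  have habsco : ∀ n, |c n / w n| = |c n| / w n := by
    intro n
    rw [abs_div, abs_of_pos (hw_pos n)]
  set R : ℕ → ℝ := fun j => ∑ n ∈ F, (|c n| / w n) * ub n j with hR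
  have hco_nonneg : ∀ n, 0 ≤ |c n| / w n := fun n => div_nonneg (abs_nonneg _) (hw_pos n).le
  have hVle : ∀ j, V j ≤ R j + 8 * |c j| := by
    intro j
    have h1 : V j ≤ ∑ n ∈ F, Kfun X0.toBFL X1.toBFL (m j)⁻¹ (m j)
        (fun t => (c n / w n) * ind (A n) t) := by
      rw [hVj, hyF]
      exact (Kfun_sum X0.toBFL X1.toBFL (hminv j) (hmpos j).le F _ (fun n _ => hfmem n)).2
    have h2 : ∀ n ∈ F, Kfun X0.toBFL X1.toBFL (m j)⁻¹ (m j)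
        (fun t => (c n / w n) * ind (A n) t) ≤ (|c n| / w n) * u n j := by
      intro n _
      have h := Kfun_smul X0.toBFL X1.toBFL (hminv j) (hmpos j).le (humem n) (c n / w n)
      rw [habsco n] at h
      exact h
    have h3 : V j ≤ ∑ n ∈ F, (|c n| / w n) * u n j :=
      le_trans h1 (Finset.sum_le_sum h2)
    have h4 : ∑ n ∈ F, (|c n| / w n) * u n j
        ≤ ∑ n ∈ F, ((|c n| / w n) * ub n j + (if n = j then 8 * |c j| else 0)) := by
      apply Finset.sum_le_sum
      intro n _
      by_cases h : n = j
      · rw [if_pos h, h]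
        have hterm : (|c j| / w j) * u j j ≤ 8 * |c j| := by
          have hd8 : u j j ≤ d j := hdiag_hi j
          have h9 : (|c j| / w j) * d j ≤ 8 * |c j| := by
            rw [div_mul_eq_mul_div, div_le_iff₀ (hw_pos j)]
            nlinarith [hd_le_w j, abs_nonneg (c j), hw_pos j]
          nlinarith [hco_nonneg j]
        nlinarith [mul_nonneg (hco_nonneg j) (hub_nonneg j j), hterm]
      · rw [if_neg h, add_zero]
        exact mul_le_mul_of_nonneg_left (hu_le_ub n j (fun hh => h hh.symm)) (hco_nonneg n)
    have h5 : ∑ n ∈ F, (if n = j then 8 * |c j| else 0) ≤ 8 * |c j| := by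
      rw [Finset.sum_ite_eq' F j (fun _ => 8 * |c j|)]
      by_cases hjF : j ∈ F
      · rw [if_pos hjF]
      · rw [if_neg hjF]; positivity
    have h6 : ∑ n ∈ F, ((|c n| / w n) * ub n j + (if n = j then 8 * |c j| else 0))
        = R j + ∑ n ∈ F, (if n = j then 8 * |c j| else 0) := by
      rw [Finset.sum_add_distrib]
    linarith
  have hR_nonneg : ∀ j, 0 ≤ R j := fun j =>
    Finset.sum_nonneg fun n _ => mul_nonneg (hco_nonneg n) (hub_nonneg n j)
  have hR_summable : Summable R := by
    apply summable_sum (s := F)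
    intro n _
    exact (hub_summable n).mul_left _
  have hz_eq : (fun n : ℕ => (2:ℝ)^(-(n:ℤ)-2)) = fun n => (1/4) * (1/2)^n := by
    funext n; rw [z3]
  have hz_sum : Summable (fun n : ℕ => (2:ℝ)^(-(n:ℤ)-2)) := by
    rw [hz_eq]
    exact (summable_geometric_of_lt_one (by norm_num) (by norm_num)).mul_left _
  have hz_tsum : ∑' n : ℕ, (2:ℝ)^(-(n:ℤ)-2) = 1/2 := by
    rw [hz_eq, tsum_mul_left, tsum_geometric_of_lt_one (by norm_num) (by norm_num)]
    norm_num
  have hRtsum : ∑' j, R j ≤ 4 * E.N (fun n => (c n : ℝ)) := by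
    have h1 : ∑' j, R j = ∑ n ∈ F, ((|c n| / w n) * ∑' j, ub n j) := by
      rw [hR, Summable.tsum_finsetSum (fun n _ => (hub_summable n).mul_left _)]
      apply Finset.sum_congr rfl
      intro n _
      rw [tsum_mul_left]
    rw [h1]
    have h2 : ∀ n ∈ F, (|c n| / w n) * ∑' j, ub n j
        ≤ 8 * E.N (fun n => (c n : ℝ)) * (2:ℝ)^(-(n:ℤ)-2) := by
      intro n _
      calc (|c n| / w n) * ∑' j, ub n j
          ≤ (|c n| / w n) * (d n * (2:ℝ)^(-(n:ℤ)-2)) :=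
            mul_le_mul_of_nonneg_left (hub_tsum n) (hco_nonneg n)
        _ = ((|c n| / w n) * d n) * (2:ℝ)^(-(n:ℤ)-2) := by ring
        _ ≤ (8 * |c n|) * (2:ℝ)^(-(n:ℤ)-2) := by
            refine mul_le_mul_of_nonneg_right ?_ (z1 n).le
            rw [div_mul_eq_mul_div, div_le_iff₀ (hw_pos n)]
            nlinarith [hd_le_w n, abs_nonneg (c n), hw_pos n]
        _ ≤ 8 * E.N (fun n => (c n : ℝ)) * (2:ℝ)^(-(n:ℤ)-2) := by
            refine mul_le_mul_of_nonneg_right ?_ (z1 n).le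
            nlinarith [hcoord n]
    calc ∑ n ∈ F, ((|c n| / w n) * ∑' j, ub n j)
        ≤ ∑ n ∈ F, 8 * E.N (fun n => (c n : ℝ)) * (2:ℝ)^(-(n:ℤ)-2) := Finset.sum_le_sum h2
      _ = 8 * E.N (fun n => (c n : ℝ)) * ∑ n ∈ F, (2:ℝ)^(-(n:ℤ)-2) := by rw [Finset.mul_sum]
      _ ≤ 8 * E.N (fun n => (c n : ℝ)) * (1/2) := by
          refine mul_le_mul_of_nonneg_left ?_ (by nlinarith [hcN_nonneg])
          calc ∑ n ∈ F, (2:ℝ)^(-(n:ℤ)-2)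
              ≤ ∑' n : ℕ, (2:ℝ)^(-(n:ℤ)-2) := Summable.sum_le_tsum F (fun n _ => (z1 n).le) hz_sum
            _ = 1/2 := hz_tsum
      _ = 4 * E.N (fun n => (c n : ℝ)) := by ring
  have hRmem : E.Mem R ∧ E.N R ≤ ∑' j, R j := by
    have habs : (fun j => |R j|) = R := by funext j; exact abs_of_nonneg (hR_nonneg j)
    have h := E.abs_le R (by rw [habs]; exact hR_summable)
    rwa [habs] at h
  have habsmem : E.Mem (fun j => |(c j : ℝ)|) ∧
      E.N (fun j => |(c j : ℝ)|) = E.N (fun n => (c n : ℝ)) := by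
    have h1 := E.mono (fun j => |(c j : ℝ)|) (fun n => (c n : ℝ))
      (fun n => by rw [abs_abs]) hcmem
    have h2 := E.mono (fun n => (c n : ℝ)) (fun j => |(c j : ℝ)|)
      (fun n => by rw [abs_abs]) h1.1
    exact ⟨h1.1, le_antisymm h1.2 h2.2⟩
  have h8cmem : E.Mem (fun j => 8 * |(c j : ℝ)|) ∧
      E.N (fun j => 8 * |(c j : ℝ)|) = 8 * E.N (fun n => (c n : ℝ)) := by
    have heq : (fun j => 8 * |(c j : ℝ)|) = (8:ℝ) • (fun j => |(c j : ℝ)|) := by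
      funext j; simp [Pi.smul_apply, smul_eq_mul]
    rw [heq]
    refine ⟨E.smul_mem _ _ habsmem.1, ?_⟩
    rw [E.smul_norm _ _ habsmem.1, habsmem.2]
    norm_num
  have hV_nonneg : ∀ j, 0 ≤ V j := fun j => Kfun_nonneg _ _ (hminv j) (hmpos j).le _
  have hV_summable : Summable V :=
    Summable.of_nonneg_of_le hV_nonneg hVle (hR_summable.add (hcsum.mul_left 8))
  have hVmemE : E.Mem V := by
    have habs : (fun j => |V j|) = V := funext fun j => abs_of_nonneg (hV_nonneg j)
    exact (E.abs_le V (by rw [habs]; exact hV_summable)).1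
  have hgmem : E.Mem (fun j => R j + 8 * |(c j : ℝ)|) :=
    E.add_mem R (fun j => 8 * |(c j : ℝ)|) hRmem.1 h8cmem.1
  have hupper : E.N V ≤ 12 * E.N (fun n => (c n : ℝ)) := by
    have h1 : E.N V ≤ E.N (fun j => R j + 8 * |(c j : ℝ)|) := by
      refine (E.mono V _ (fun j => ?_) hgmem).2
      rw [abs_of_nonneg (hV_nonneg j),
        abs_of_nonneg (add_nonneg (hR_nonneg j) (by positivity) : (0:ℝ) ≤ R j + 8 * |(c j : ℝ)|)]
      exact hVle j
    have h2 : E.N (fun j => R j + 8 * |(c j : ℝ)|)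
        ≤ E.N R + E.N (fun j => 8 * |(c j : ℝ)|) :=
      E.add_le R (fun j => 8 * |(c j : ℝ)|) hRmem.1 h8cmem.1
    have h3 : E.N R ≤ 4 * E.N (fun n => (c n : ℝ)) := le_trans hRmem.2 hRtsum
    rw [h8cmem.2] at h2
    linarith
  have hlowV : ∀ j, |(c j : ℝ)| / 10 ≤ V j := by
    intro j
    by_cases hjF : j ∈ F
    · have hcj : (c j : ℝ) ≠ 0 := Finsupp.mem_support_iff.mp hjF
      have hwj : w j ≠ 0 := ne_of_gt (hw_pos j)
      have hθ : ∀ t, |ind (A j) t| ≤ 1 := fun t => by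
        rw [abs_of_nonneg (ind_nonneg _ _)]; exact ind_le_one _ _
      have hres := Kfun_restrict X0.toBFL X1.toBFL (hminv j) (hmpos j).le hymem
        (ind (A j)) (ind_meas (hAmeas j)) hθ
      have heq : (fun t => ind (A j) t * y t)
          = fun t => (c j / w j) * ind (A j) t := by
        funext s
        by_cases hs : s ∈ A j
        · have h1 : ind (A j) s = 1 := by simp [ind, Set.indicator_apply, hs]
          have hterm : ∀ b ∈ F, b ≠ j → (c b / w b) * ind (A b) s = 0 := by
            intro b hb hbj
            have hsb : s ∉ A b := fun hmem =>
              (Set.disjoint_left.mp (hAdisj hbj) hmem) hs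
            simp [ind, Set.indicator_apply, hsb]
          rw [h1, one_mul, mul_one]
          calc y s = ∑ n ∈ F, (c n / w n) * ind (A n) s := by rw [hyF]
            _ = (c j / w j) * ind (A j) s :=
                Finset.sum_eq_single j hterm (fun hj => absurd hjF hj)
            _ = c j / w j := by rw [h1, mul_one]
        · have h1 : ind (A j) s = 0 := by simp [ind, Set.indicator_apply, hs]
          rw [h1, zero_mul, mul_zero]
      rw [heq] at hres
      have hge := Kfun_smul_ge X0.toBFL X1.toBFL (hminv j) (hmpos j).le (humem j)
        (div_ne_zero hcj hwj)
      have hcomb : |c j / w j| * u j j ≤ V j := le_trans hge hres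
      rw [habsco j] at hcomb
      have h5 : |(c j : ℝ)| / 10 ≤ (|(c j : ℝ)| / w j) * u j j := by
        have h6 := hdiag_lo j
        have h7 := hw_hi j
        rw [div_mul_eq_mul_div, le_div_iff₀ (hw_pos j)]
        nlinarith [abs_nonneg (c j), hdpos j]
      linarith
    · have hc0 : (c j : ℝ) = 0 := Finsupp.notMem_support_iff.mp hjF
      rw [hc0]
      simpa using hV_nonneg j
  have hlower : (10:ℝ)⁻¹ * E.N (fun n => (c n : ℝ)) ≤ E.N V := by
    have heq : (fun j => (10:ℝ)⁻¹ * c j) = (10:ℝ)⁻¹ • (fun n => (c n : ℝ)) := by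
      funext j; simp [Pi.smul_apply, smul_eq_mul]
    have h1 := E.mono (fun j => (10:ℝ)⁻¹ * c j) V ?_ hVmemE
    · have h2 := h1.2
      rw [heq, E.smul_norm _ _ hcmem] at h2
      rw [show |(10:ℝ)⁻¹| = (10:ℝ)⁻¹ by norm_num] at h2
      exact h2
    · intro j
      rw [abs_of_nonneg (hV_nonneg j), abs_mul]
      rw [show |(10:ℝ)⁻¹| = (10:ℝ)⁻¹ by norm_num]
      calc (10:ℝ)⁻¹ * |(c j : ℝ)| = |(c j : ℝ)| / 10 := by ring
        _ ≤ V j := hlowV j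
  constructor
  · calc (12:ℝ)⁻¹ * E.N (fun n => (c n : ℝ))
        ≤ (10:ℝ)⁻¹ * E.N (fun n => (c n : ℝ)) := by nlinarith [hcN_nonneg]
      _ ≤ E.N V := hlower
  · exact hupper
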